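/- Let M be a real symmetric moment matrix M_d(n) with columns indexed by monomials X^i of degree at most n, and for w ∈ ℝ^d let v(w) be the vector of monomials (w^i)_{|i| ≤ n}. Then w lies in the algebraic variety of M (the common zero set of all polynomials p with p-coefficient vector in ker M) if and only if v(w) lies in the range of M. -/

import Mathlib

open RealInnerProductSpace

/-- Multi-indices in `d` variables of total degree at most `n`. -/
def MIdx (d n : ℕ) : Type := {i : Fin d → Fin (n + 1) // ∑ j, (i j : ℕ) ≤ n}

noncomputable instance (d n : ℕ) : Fintype (MIdx d n) := by
  unfold MIdx; infer_instance

/-- The vector of monomials `w ^ i`, `|i| ≤ n`, evaluated at `w`. -/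
def monVec {d n : ℕ} (w : Fin d → ℝ) : MIdx d n → ℝ :=
  fun i => ∏ j, w j ^ (i.1 j : ℕ)

/-- For a real symmetric matrix `M`, any vector orthogonal to `ker M` lies in `ran M`. -/
lemma symm_range_aux {ι : Type*} [Fintype ι] (M : Matrix ι ι ℝ)
    (hsym : M.IsSymm) (v : ι → ℝ)
    (h : ∀ a, M.mulVec a = 0 → ∑ i, a i * v i = 0) :
    v ∈ LinearMap.range M.mulVecLin := by
  classical
  let T : EuclideanSpace ℝ ι →ₗ[ℝ] EuclideanSpace ℝ ι := Matrix.toEuclideanLin M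
  have hinner : ∀ x y : EuclideanSpace ℝ ι, ⟪x, y⟫ = ∑ i, x i * y i := by
    intro x y
    simp [PiLp.inner_apply, RCLike.inner_apply, mul_comm]
  have hTsym : ∀ x y : EuclideanSpace ℝ ι, ⟪T x, y⟫ = ⟪x, T y⟫ := by
    intro x y
    rw [hinner, hinner]
    show ∑ i, M.mulVec x i * y i = ∑ i, x i * M.mulVec y i
    simp only [Matrix.mulVec, dotProduct, Finset.sum_mul, Finset.mul_sum]
    rw [Finset.sum_comm]
    apply Finset.sum_congr rfl; intro i _
    apply Finset.sum_congr rfl; intro j _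
    rw [show M j i = M i j from congrFun (congrFun hsym.eq i) j ▸ rfl]; ring
  let K : Submodule ℝ (EuclideanSpace ℝ ι) := LinearMap.range T
  have hKo : Kᗮ = LinearMap.ker T := by
    ext a
    constructor
    · intro ha
      have h2 : ∀ y : EuclideanSpace ℝ ι, ⟪T a, y⟫ = 0 := by
        intro y
        rw [real_inner_comm, ← hTsym]
        exact ha (T y) ⟨y, rfl⟩
      exact LinearMap.mem_ker.mpr (inner_self_eq_zero.mp (h2 (T a)))
    · intro ha u hu
      obtain ⟨x, rfl⟩ := hu
      rw [real_inner_comm, ← hTsym, LinearMap.mem_ker.mp ha, inner_zero_left]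
  have hK : Kᗮᗮ = K := Submodule.orthogonal_orthogonal K
  have hv : (WithLp.toLp 2 v : EuclideanSpace ℝ ι) ∈ Kᗮᗮ := by
    intro a ha
    rw [hKo] at ha
    rw [hinner]
    exact h a (congrArg WithLp.ofLp (LinearMap.mem_ker.mp ha))
  rw [hK] at hv
  obtain ⟨y, hy⟩ := hv
  exact ⟨y.ofLp, congrArg WithLp.ofLp hy⟩

theorem mem_variety_iff_mem_range_momentMatrix (d n : ℕ)
    (β : (Fin d → ℕ) → ℝ) (w : Fin d → ℝ)
    (M : Matrix (MIdx d n) (MIdx d n) ℝ)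
    (hM : M = Matrix.of fun i j : MIdx d n => β (fun t => (i.1 t : ℕ) + (j.1 t : ℕ))) :
    (∀ a : MIdx d n → ℝ, M.mulVec a = 0 → ∑ i : MIdx d n, a i * ∏ j, w j ^ (i.1 j : ℕ) = 0)
      ↔ (monVec w : MIdx d n → ℝ) ∈ LinearMap.range M.mulVecLin := by
  classical
  have hsym : M.IsSymm := by
    rw [hM]
    ext i j
    exact congrArg β (funext fun t => Nat.add_comm _ _)
  constructor
  · intro h
    exact symm_range_aux M hsym (monVec w) (fun a ha => h a ha)
  · rintro ⟨x, hx⟩ a ha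
    have hx' : M.mulVec x = monVec w := hx
    have key : ∑ i, a i * M.mulVec x i = 0 := by
      have e : ∑ i, a i * M.mulVec x i = dotProduct a (M.mulVec x) := rfl
      rw [e, Matrix.dotProduct_mulVec,
        show Matrix.vecMul a M = _ from hsym.eq ▸ Matrix.vecMul_transpose M a, ha]
      simp
    calc ∑ i : MIdx d n, a i * ∏ j, w j ^ (i.1 j : ℕ)
        = ∑ i, a i * monVec w i := rfl
      _ = ∑ i, a i * M.mulVec x i := by rw [hx']
      _ = 0 := key
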